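/- Let d, n ≥ 1, B > 0, R > 0. Let x_1,…,x_n ∈ ℝ^d satisfy ‖x_i‖_∞ ≤ B and let y_1,…,y_n ∈ {−1, 1}. Define the sample logistic loss L_n(θ) = (1/n)·∑_{i=1}^n log(1 + exp(−y_i·⟨x_i, θ⟩)), whose gradient is ∇L_n(θ) = −(1/n)·∑_{i=1}^n (y_i/(1 + exp(y_i·⟨x_i, θ⟩)))·x_i, and let ψ(α) = exp(α)/(1 + exp(α))². Then for all θ, θ̃ ∈ ℝ^d with ‖θ‖₁ ≤ R and ‖θ̃‖₁ ≤ R: L_n(θ̃) − L_n(θ) − ⟨∇L_n(θ), θ̃ − θ⟩ ≥ (ψ(B·R)/(2n))·∑_{i=1}^n ⟨x_i, θ̃ − θ⟩². -/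

import Mathlib

open Finset

/-- The second derivative of the logistic function,
`ψ(α) = exp(α)/(1 + exp(α))²`. -/
noncomputable def logisticPsi (α : ℝ) : ℝ := Real.exp α / (1 + Real.exp α) ^ 2


lemma psi_pos (s : ℝ) : 0 < logisticPsi s := by
  unfold logisticPsi
  positivity

lemma psi_neg (s : ℝ) : logisticPsi (-s) = logisticPsi s := by
  unfold logisticPsi
  rw [Real.exp_neg]
  have h := Real.exp_pos s
  field_simp
  ring

lemma psi_ge (c s : ℝ) (h : |s| ≤ c) : logisticPsi c ≤ logisticPsi s := by
  unfold logisticPsi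
  have hs := abs_le.1 h
  have h1 : Real.exp s ≤ Real.exp c := Real.exp_le_exp.2 (le_trans (le_abs_self s) h)
  have h2 : (1:ℝ) ≤ Real.exp s * Real.exp c := by
    rw [← Real.exp_add]
    refine Real.one_le_exp (by linarith [neg_abs_le s])
  have hpc : (0:ℝ) < 1 + Real.exp c := by positivity
  have hps : (0:ℝ) < 1 + Real.exp s := by positivity
  rw [div_le_div_iff₀ (by positivity) (by positivity)]
  nlinarith [mul_nonneg (sub_nonneg.2 h1) (sub_nonneg.2 h2), Real.exp_pos s, Real.exp_pos c]

lemma hasDerivAt_g (s : ℝ) :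
    HasDerivAt (fun u => Real.log (1 + Real.exp u)) (Real.exp s / (1 + Real.exp s)) s := by
  have h : HasDerivAt (fun u => 1 + Real.exp u) (Real.exp s) s :=
    (Real.hasDerivAt_exp s).const_add 1
  have hne : (1 : ℝ) + Real.exp s ≠ 0 := by positivity
  exact h.log hne

lemma hasDerivAt_g' (s : ℝ) :
    HasDerivAt (fun u => Real.exp u / (1 + Real.exp u)) (logisticPsi s) s := by
  have h1 := Real.hasDerivAt_exp s
  have h2 : HasDerivAt (fun u => 1 + Real.exp u) (Real.exp s) s := h1.const_add 1
  have hne : (1 : ℝ) + Real.exp s ≠ 0 := by positivity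
  have := h1.div h2 hne
  refine this.congr_deriv ?_
  unfold logisticPsi
  field_simp
  ring

lemma logistic_taylor (a b m : ℝ) (hm : 0 ≤ m)
    (hψ : ∀ t ∈ Set.Icc (0:ℝ) 1, m ≤ logisticPsi (a + t * b)) :
    m * b ^ 2 / 2 ≤
      Real.log (1 + Real.exp (a + b)) - Real.log (1 + Real.exp a)
        - Real.exp a / (1 + Real.exp a) * b := by
  set c : ℝ := Real.exp a / (1 + Real.exp a) with hc
  set φ' : ℝ → ℝ := fun t =>
    Real.exp (a + t * b) / (1 + Real.exp (a + t * b)) * b - c * b - m * b ^ 2 * t with hφ'def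
  set φ : ℝ → ℝ := fun t =>
    Real.log (1 + Real.exp (a + t * b)) - c * b * t - m * b ^ 2 * t ^ 2 / 2 with hφdef
  have hline : ∀ t : ℝ, HasDerivAt (fun t : ℝ => a + t * b) b t := fun t => by
    simpa using ((hasDerivAt_id t).mul_const b).const_add a
  have hφ : ∀ t, HasDerivAt φ (φ' t) t := by
    intro t
    have h1 : HasDerivAt (fun t : ℝ => Real.log (1 + Real.exp (a + t * b)))
        (Real.exp (a + t * b) / (1 + Real.exp (a + t * b)) * b) t := by
      have := (hasDerivAt_g (a + t * b)).comp t (hline t)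
      simpa [Function.comp_def] using this
    have h2 : HasDerivAt (fun t : ℝ => c * b * t) (c * b) t := by
      simpa using (hasDerivAt_id t).const_mul (c * b)
    have h3 : HasDerivAt (fun t : ℝ => m * b ^ 2 * t ^ 2 / 2) (m * b ^ 2 * t) t := by
      have h := ((hasDerivAt_pow 2 t).const_mul (m * b ^ 2)).div_const 2
      refine h.congr_deriv ?_
      ring
    exact (h1.sub h2).sub h3
  have hφ' : ∀ t, HasDerivAt φ' (logisticPsi (a + t * b) * b ^ 2 - m * b ^ 2) t := by
    intro t
    have h1 : HasDerivAt (fun t : ℝ => Real.exp (a + t * b) / (1 + Real.exp (a + t * b)))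
        (logisticPsi (a + t * b) * b) t := by
      have := (hasDerivAt_g' (a + t * b)).comp t (hline t)
      simpa [Function.comp_def] using this
    have h2 : HasDerivAt (fun t : ℝ => m * b ^ 2 * t) (m * b ^ 2) t := by
      simpa using (hasDerivAt_id t).const_mul (m * b ^ 2)
    have := ((h1.mul_const b).sub_const (c * b)).sub h2
    refine this.congr_deriv ?_
    ring
  have hdiff' : Differentiable ℝ φ' := fun t => (hφ' t).differentiableAt
  have hmono' : MonotoneOn φ' (Set.Icc (0:ℝ) 1) := by
    apply monotoneOn_of_deriv_nonneg (convex_Icc 0 1) hdiff'.continuous.continuousOn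
      (fun t _ => (hdiff' t).differentiableWithinAt)
    intro t ht
    rw [interior_Icc] at ht
    rw [(hφ' t).deriv]
    have h := hψ t ⟨ht.1.le, ht.2.le⟩
    nlinarith [sq_nonneg b]
  have hφ'0 : φ' 0 = 0 := by
    simp [hφ'def, hc]
  have hφ'nonneg : ∀ t ∈ Set.Icc (0:ℝ) 1, 0 ≤ φ' t := by
    intro t ht
    have := hmono' (Set.left_mem_Icc.2 zero_le_one) ht ht.1
    linarith [hφ'0 ▸ this]
  have hdiff : Differentiable ℝ φ := fun t => (hφ t).differentiableAt
  have hmono : MonotoneOn φ (Set.Icc (0:ℝ) 1) := by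
    apply monotoneOn_of_deriv_nonneg (convex_Icc 0 1) hdiff.continuous.continuousOn
      (fun t _ => (hdiff t).differentiableWithinAt)
    intro t ht
    rw [interior_Icc] at ht
    rw [(hφ t).deriv]
    exact hφ'nonneg t ⟨ht.1.le, ht.2.le⟩
  have hfin := hmono (Set.left_mem_Icc.2 zero_le_one) (Set.right_mem_Icc.2 zero_le_one) zero_le_one
  have h0 : φ 0 = Real.log (1 + Real.exp a) := by
    simp [hφdef]
  have h1 : φ 1 = Real.log (1 + Real.exp (a + b)) - c * b - m * b ^ 2 / 2 := by
    simp [hφdef]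
  rw [h0, h1] at hfin
  linarith
lemma per_sample (yv u b m : ℝ) (hm : 0 ≤ m) (hy : yv = 1 ∨ yv = -1)
    (hψ : ∀ t ∈ Set.Icc (0:ℝ) 1, m ≤ logisticPsi (u + t * b)) :
    m * b ^ 2 / 2 ≤
      Real.log (1 + Real.exp (-(yv * (u + b)))) - Real.log (1 + Real.exp (-(yv * u)))
        + yv / (1 + Real.exp (yv * u)) * b := by
  have hpu := Real.exp_pos u
  rcases hy with h | h <;> subst h
  · have hψ' : ∀ t ∈ Set.Icc (0:ℝ) 1, m ≤ logisticPsi (-u + t * -b) := by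
      intro t ht
      have he : -u + t * -b = -(u + t * b) := by ring
      rw [he, psi_neg]
      exact hψ t ht
    have hk := logistic_taylor (-u) (-b) m hm hψ'
    have e1 : -((1:ℝ) * (u + b)) = -u + -b := by ring
    have e2 : -((1:ℝ) * u) = -u := by ring
    have e3 : Real.exp (-u) / (1 + Real.exp (-u)) * (-b)
        = -((1:ℝ) / (1 + Real.exp (1 * u)) * b) := by
      rw [Real.exp_neg, one_mul]
      field_simp
      ring
    have hsq : (-b : ℝ) ^ 2 = b ^ 2 := by ring
    rw [hsq, e3] at hk
    rw [e1, e2]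
    linarith
  · have hk := logistic_taylor u b m hm hψ
    have e1 : -((-1:ℝ) * (u + b)) = u + b := by ring
    have e2 : -((-1:ℝ) * u) = u := by ring
    have e3 : Real.exp u / (1 + Real.exp u) * b
        = -((-1:ℝ) / (1 + Real.exp (-1 * u)) * b) := by
      rw [neg_one_mul, Real.exp_neg]
      field_simp
      ring
    rw [e3] at hk
    rw [e1, e2]
    linarith

/-- The sample logistic loss
`L_n(θ) = (1/n)·∑_{i=1}^n log(1 + exp(−y_i ⟨x_i, θ⟩))`. -/
noncomputable def sampleLogisticLoss {d n : ℕ} (x : Fin n → Fin d → ℝ)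
    (y : Fin n → ℝ) (θ : Fin d → ℝ) : ℝ :=
  (1 / (n : ℝ)) * ∑ i, Real.log (1 + Real.exp (-(y i * ∑ j, x i j * θ j)))

/-- The gradient of the sample logistic loss,
`∇L_n(θ) = −(1/n)·∑_{i=1}^n (y_i/(1 + exp(y_i ⟨x_i, θ⟩)))·x_i`. -/
noncomputable def sampleLogisticGrad {d n : ℕ} (x : Fin n → Fin d → ℝ)
    (y : Fin n → ℝ) (θ : Fin d → ℝ) : Fin d → ℝ :=
  fun j => -(1 / (n : ℝ)) *
    ∑ i, (y i / (1 + Real.exp (y i * ∑ k, x i k * θ k))) * x i j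

/-- Restricted strong convexity of the sample logistic loss over an
ℓ₁-ball.  If `‖x_i‖_∞ ≤ B`, `y_i ∈ {−1, 1}` and `‖θ‖₁, ‖θ̃‖₁ ≤ R`, then
`L_n(θ̃) − L_n(θ) − ⟨∇L_n(θ), θ̃ − θ⟩ ≥ (ψ(BR)/(2n))·∑_i ⟨x_i, θ̃ − θ⟩²`. -/
theorem sample_logistic_rsc {d n : ℕ} (hd : 1 ≤ d) (hn : 1 ≤ n)
    (B R : ℝ) (hB : 0 < B) (hR : 0 < R)
    (x : Fin n → Fin d → ℝ) (y : Fin n → ℝ)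
    (hx : ∀ i j, |x i j| ≤ B)
    (hy : ∀ i, y i = 1 ∨ y i = -1)
    (θ θt : Fin d → ℝ)
    (hθ : ∑ j, |θ j| ≤ R) (hθt : ∑ j, |θt j| ≤ R) :
    sampleLogisticLoss x y θt - sampleLogisticLoss x y θ
        - (∑ j, sampleLogisticGrad x y θ j * (θt j - θ j))
      ≥ logisticPsi (B * R) / (2 * (n : ℝ)) *
          ∑ i, (∑ j, x i j * (θt j - θ j)) ^ 2 := by
  have hn0 : (0:ℝ) < n := by exact_mod_cast hn
  set m := logisticPsi (B * R) with hmdef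
  have hm0 : 0 ≤ m := (psi_pos _).le
  set u : Fin n → ℝ := fun i => ∑ j, x i j * θ j with hu
  set bb : Fin n → ℝ := fun i => ∑ j, x i j * (θt j - θ j) with hb
  have hv : ∀ i, ∑ j, x i j * θt j = u i + bb i := by
    intro i
    rw [hu, hb, ← Finset.sum_add_distrib]
    exact Finset.sum_congr rfl fun j _ => by ring
  have habs : ∀ i, ∀ t ∈ Set.Icc (0:ℝ) 1, |u i + t * bb i| ≤ B * R := by
    intro i t ht
    obtain ⟨ht0, ht1⟩ := ht
    have heq : u i + t * bb i = ∑ j, x i j * ((1 - t) * θ j + t * θt j) := by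
      rw [hu, hb, Finset.mul_sum, ← Finset.sum_add_distrib]
      exact Finset.sum_congr rfl fun j _ => by ring
    rw [heq]
    calc |∑ j, x i j * ((1 - t) * θ j + t * θt j)|
        ≤ ∑ j, |x i j * ((1 - t) * θ j + t * θt j)| := Finset.abs_sum_le_sum_abs _ _
      _ ≤ ∑ j, B * ((1 - t) * |θ j| + t * |θt j|) := by
          refine Finset.sum_le_sum fun j _ => ?_
          rw [abs_mul]
          have habs2 : |(1 - t) * θ j + t * θt j| ≤ (1 - t) * |θ j| + t * |θt j| := by
            calc |(1 - t) * θ j + t * θt j| ≤ |(1 - t) * θ j| + |t * θt j| := abs_add_le _ _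
              _ = (1 - t) * |θ j| + t * |θt j| := by
                  rw [abs_mul, abs_mul, abs_of_nonneg (by linarith : (0:ℝ) ≤ 1 - t),
                    abs_of_nonneg ht0]
          exact mul_le_mul (hx i j) habs2 (abs_nonneg _) hB.le
      _ = B * (1 - t) * ∑ j, |θ j| + B * t * ∑ j, |θt j| := by
          rw [Finset.mul_sum, Finset.mul_sum, ← Finset.sum_add_distrib]
          exact Finset.sum_congr rfl fun j _ => by ring
      _ ≤ B * R := by
          have h1 := mul_le_mul_of_nonneg_left hθ (by nlinarith : (0:ℝ) ≤ B * (1 - t))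
          have h2 := mul_le_mul_of_nonneg_left hθt (by positivity : (0:ℝ) ≤ B * t)
          nlinarith
  have hψ : ∀ i, ∀ t ∈ Set.Icc (0:ℝ) 1, m ≤ logisticPsi (u i + t * bb i) :=
    fun i t ht => psi_ge _ _ (habs i t ht)
  have hper : ∀ i, m * bb i ^ 2 / 2 ≤
      Real.log (1 + Real.exp (-(y i * (u i + bb i)))) -
        Real.log (1 + Real.exp (-(y i * u i))) +
        y i / (1 + Real.exp (y i * u i)) * bb i :=
    fun i => per_sample (y i) (u i) (bb i) m hm0 (hy i) (hψ i)
  have hsum := Finset.sum_le_sum (fun i (_ : i ∈ Finset.univ) => hper i)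
  -- rewrite the gradient term
  have hu' : ∀ i, (∑ j, x i j * θ j) = u i := fun i => rfl
  have hgrad : ∑ j, sampleLogisticGrad x y θ j * (θt j - θ j)
      = -(1 / (n:ℝ)) * ∑ i, y i / (1 + Real.exp (y i * u i)) * bb i := by
    have step1 : ∀ j, sampleLogisticGrad x y θ j * (θt j - θ j)
        = ∑ i, -(1 / (n:ℝ)) *
            (y i / (1 + Real.exp (y i * u i)) * (x i j * (θt j - θ j))) := by
      intro j
      unfold sampleLogisticGrad
      simp only [hu']
      rw [Finset.mul_sum, Finset.sum_mul]
      exact Finset.sum_congr rfl fun i _ => by ring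
    calc ∑ j, sampleLogisticGrad x y θ j * (θt j - θ j)
        = ∑ j, ∑ i, -(1 / (n:ℝ)) *
            (y i / (1 + Real.exp (y i * u i)) * (x i j * (θt j - θ j))) :=
          Finset.sum_congr rfl fun j _ => step1 j
      _ = ∑ i, ∑ j, -(1 / (n:ℝ)) *
            (y i / (1 + Real.exp (y i * u i)) * (x i j * (θt j - θ j))) :=
          Finset.sum_comm
      _ = -(1 / (n:ℝ)) * ∑ i, y i / (1 + Real.exp (y i * u i)) * bb i := by
          rw [Finset.mul_sum]
          refine Finset.sum_congr rfl fun i _ => ?_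
          rw [show bb i = ∑ j, x i j * (θt j - θ j) from rfl, Finset.mul_sum,
            Finset.mul_sum, Finset.mul_sum]
  have hloss : sampleLogisticLoss x y θt - sampleLogisticLoss x y θ
        - (∑ j, sampleLogisticGrad x y θ j * (θt j - θ j))
      = (1 / (n:ℝ)) * ∑ i,
          (Real.log (1 + Real.exp (-(y i * (u i + bb i)))) -
            Real.log (1 + Real.exp (-(y i * u i))) +
            y i / (1 + Real.exp (y i * u i)) * bb i) := by
    unfold sampleLogisticLoss
    rw [hgrad]
    simp only [Finset.sum_add_distrib, Finset.sum_sub_distrib]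
    have hth : ∀ i, Real.log (1 + Real.exp (-(y i * ∑ j, x i j * θt j)))
        = Real.log (1 + Real.exp (-(y i * (u i + bb i)))) := fun i => by rw [hv i]
    rw [Finset.sum_congr rfl fun i _ => hth i]
    ring
  rw [ge_iff_le, hloss]
  have hq : ∑ i, m * bb i ^ 2 / 2 = m / 2 * ∑ i, bb i ^ 2 := by
    rw [Finset.mul_sum]
    exact Finset.sum_congr rfl fun i _ => by ring
  rw [hq] at hsum
  calc m / (2 * (n:ℝ)) * ∑ i, bb i ^ 2
      = (1 / (n:ℝ)) * (m / 2 * ∑ i, bb i ^ 2) := by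
        field_simp
        try ring
        try tauto
    _ ≤ _ := by
        apply mul_le_mul_of_nonneg_left hsum (by positivity)
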